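/- arXiv:1008.3066 — 3 statements merged into one kernel-verified Lean document; each statement's English description precedes it below -/
import Mathlib

section
/- For all differentiable functions u ≥ 0 and v > 0 on a domain, and any p > 1, the generalized Picone inequality holds pointwise: |∇u|^p ≥ |∇v|^{p-2} ⟨∇v, ∇(u^p / v^{p-1})⟩. -/
open InnerProductSpace Filter Real

lemma young_aux {p X b : ℝ} (hp : 1 < p) (hX : 0 ≤ X) (hb : 0 ≤ b) :
    p * (X ^ (p - 1) * b) ≤ (p - 1) * X ^ p + b ^ p := by
  have hp0 : (0:ℝ) < p := lt_trans one_pos hp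
  have hp1 : (0:ℝ) < p - 1 := by linarith
  have hpq : (p / (p - 1)).HolderConjugate p :=
    (Real.HolderConjugate.conjExponent hp).symm
  have h := Real.young_inequality_of_nonneg (Real.rpow_nonneg hX (p-1)) hb hpq
  have hXp : (X ^ (p - 1)) ^ (p / (p - 1)) = X ^ p := by
    rw [← Real.rpow_mul hX]
    congr 1
    field_simp
  rw [hXp] at h
  have : X ^ (p-1) * b ≤ (p-1)/p * X ^ p + b ^ p / p := by
    calc X ^ (p-1) * b ≤ X ^ p / (p / (p-1)) + b ^ p / p := h
    _ = (p-1)/p * X ^ p + b ^ p / p := by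
        rw [div_div_eq_mul_div, mul_comm]
        ring
  have h2 := mul_le_mul_of_nonneg_left this hp0.le
  have h3 : p * ((p-1)/p * X ^ p + b ^ p / p) = (p-1) * X ^ p + b ^ p := by
    field_simp
  linarith

/-- Generalized Picone inequality: for differentiable `u ≥ 0` and `v > 0` on an open set
`Ω ⊆ ℝⁿ` and `p > 1`, pointwise
`|∇u|^p ≥ |∇v|^{p-2} ⟨∇v, ∇(u^p / v^{p-1})⟩`. -/
theorem picone_inequality {n : ℕ} (Ω : Set (EuclideanSpace ℝ (Fin n))) (hΩ : IsOpen Ω)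
    (p : ℝ) (hp : 1 < p) (u v : EuclideanSpace ℝ (Fin n) → ℝ)
    (hu : DifferentiableOn ℝ u Ω) (hv : DifferentiableOn ℝ v Ω)
    (hu0 : ∀ x ∈ Ω, 0 ≤ u x) (hv0 : ∀ x ∈ Ω, 0 < v x) :
    ∀ x ∈ Ω,
      ‖gradient v x‖ ^ (p - 2) *
        inner ℝ (gradient v x) (gradient (fun y => u y ^ p / v y ^ (p - 1)) x)
      ≤ ‖gradient u x‖ ^ p := by
  intro x hx
  have hxn : Ω ∈ nhds x := hΩ.mem_nhds hx
  have hud : DifferentiableAt ℝ u x := (hu x hx).differentiableAt hxn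
  have hvd : DifferentiableAt ℝ v x := (hv x hx).differentiableAt hxn
  have hvx : 0 < v x := hv0 x hx
  have hux : 0 ≤ u x := hu0 x hx
  set A := gradient u x with hA
  set B := gradient v x with hB
  have hAf : HasFDerivAt u (toDual ℝ _ A) x := hud.hasGradientAt
  have hBf : HasFDerivAt v (toDual ℝ _ B) x := hvd.hasGradientAt
  -- near x, v > 0
  have hvev : ∀ᶠ y in nhds x, 0 < v y :=
    hvd.continuousAt.eventually (eventually_gt_nhds hvx)
  have heq : (fun y => u y ^ p / v y ^ (p - 1)) =ᶠ[nhds x]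
      (fun y => u y ^ p * v y ^ (1 - p)) := by
    filter_upwards [hvev] with y hy
    rw [show (1 - p) = -(p-1) by ring, Real.rpow_neg hy.le, div_eq_mul_inv]
  -- derivative of u ^ p
  have hU : HasFDerivAt (fun y => u y ^ p) ((p * u x ^ (p-1)) • (toDual ℝ _ A)) x :=
    (Real.hasDerivAt_rpow_const (Or.inr hp.le)).comp_hasFDerivAt x hAf
  have hV : HasFDerivAt (fun y => v y ^ (1 - p))
      (((1-p) * v x ^ (1 - p - 1)) • (toDual ℝ _ B)) x :=
    (Real.hasDerivAt_rpow_const (Or.inl hvx.ne')).comp_hasFDerivAt x hBf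
  have hF : HasFDerivAt (fun y => u y ^ p * v y ^ (1 - p))
      ((u x ^ p) • (((1-p) * v x ^ (1 - p - 1)) • (toDual ℝ _ B))
        + (v x ^ (1-p)) • ((p * u x ^ (p-1)) • (toDual ℝ _ A))) x := hU.mul hV
  have hF' : HasFDerivAt (fun y => u y ^ p / v y ^ (p - 1))
      ((u x ^ p) • (((1-p) * v x ^ (1 - p - 1)) • (toDual ℝ _ B))
        + (v x ^ (1-p)) • ((p * u x ^ (p-1)) • (toDual ℝ _ A))) x :=
    hF.congr_of_eventuallyEq heq
  have hinner : (inner ℝ B (gradient (fun y => u y ^ p / v y ^ (p - 1)) x) : ℝ)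
      = (u x ^ p) * ((1-p) * v x ^ (1 - p - 1)) * (inner ℝ B B : ℝ)
        + (v x ^ (1-p)) * (p * u x ^ (p-1)) * (inner ℝ A B : ℝ) := by
    rw [real_inner_comm]
    unfold gradient
    rw [hF'.fderiv, toDual_symm_apply]
    simp [toDual_apply_apply, real_inner_comm]
    ring
  rw [hinner, real_inner_self_eq_norm_mul_norm]
  set a := ‖B‖ with ha'
  set b := ‖A‖ with hb'
  set s := (inner ℝ A B : ℝ) with hs'
  have hb : (0:ℝ) ≤ b := norm_nonneg _
  set t := u x / v x with ht'
  have ht : (0:ℝ) ≤ t := div_nonneg hux hvx.le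
  have hup : u x ^ p * v x ^ (1-p-1) = t ^ p := by
    rw [ht', Real.div_rpow hux hvx.le, show (1-p-1) = -p by ring,
      Real.rpow_neg hvx.le, div_eq_mul_inv]
  have hup1 : v x ^ (1-p) * u x ^ (p-1) = t ^ (p-1) := by
    rw [ht', Real.div_rpow hux hvx.le, show (1-p) = -(p-1) by ring,
      Real.rpow_neg hvx.le, div_eq_mul_inv]
    ring
  rcases (norm_nonneg B).eq_or_lt with hB0 | ha
  · have hBz : B = 0 := by rwa [eq_comm, norm_eq_zero] at hB0
    have haz : a = 0 := hB0.symm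
    have hsz : s = 0 := by rw [hs', hBz]; simp
    rw [haz, hsz]
    have hz : (0:ℝ) ^ (p-2) * (u x ^ p * ((1-p) * v x ^ (1-p-1)) * ((0:ℝ)*0)
        + v x ^ (1-p) * (p * u x ^ (p-1)) * 0) = 0 := by ring
    rw [hz]
    exact Real.rpow_nonneg hb p
  · rw [← ha'] at ha
    have e1 : a ^ (p-2) * (a*a) = a ^ p := by
      rw [show a*a = a ^ ((2:ℕ):ℝ) by rw [Real.rpow_natCast]; ring,
        ← Real.rpow_add ha]
      norm_num
    have e2 : a ^ (p-2) * a = a ^ (p-1) := by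
      nth_rewrite 2 [show a = a ^ ((1:ℕ):ℝ) by rw [Real.rpow_natCast]; ring]
      rw [← Real.rpow_add ha]
      congr 1
      push_cast
      ring
    have hmul : (t*a) ^ (p-1) = t ^ (p-1) * a ^ (p-1) := Real.mul_rpow ht ha.le
    have hmul2 : (t*a) ^ p = t ^ p * a ^ p := Real.mul_rpow ht ha.le
    have expand : a ^ (p-2) * (u x ^ p * ((1-p) * v x ^ (1-p-1)) * (a*a)
        + v x ^ (1-p) * (p * u x ^ (p-1)) * s)
        = (1-p) * (t ^ p * a ^ p) + (p * t ^ (p-1) * a ^ (p-2)) * s := by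
      rw [← e1, show u x ^ p * ((1-p) * v x ^ (1-p-1)) = (1-p) * (u x ^ p * v x ^ (1-p-1)) by ring,
        hup, show v x ^ (1-p) * (p * u x ^ (p-1)) = p * (v x ^ (1-p) * u x ^ (p-1)) by ring, hup1]
      ring
    have hsle : s ≤ b * a := real_inner_le_norm A B
    have hcoef : (0:ℝ) ≤ p * t ^ (p-1) * a ^ (p-2) := by positivity
    have step2 : (p * t ^ (p-1) * a ^ (p-2)) * s ≤ (p * t ^ (p-1) * a ^ (p-2)) * (b*a) :=
      mul_le_mul_of_nonneg_left hsle hcoef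
    have step3 : (p * t ^ (p-1) * a ^ (p-2)) * (b*a) = p * ((t*a) ^ (p-1) * b) := by
      rw [hmul, ← e2]
      ring
    have young := young_aux hp (mul_nonneg ht ha.le) hb
    rw [hmul2] at young
    rw [expand]
    linarith
end

section
/- If a C¹ functional E on a Banach space has no critical value in [c−ε, c+ε] and satisfies Palais–Smale, then the minimax value over a family of paths with endpoints at levels below c−ε cannot equal c. -/
open Set Filter Topology

lemma weak_ekeland {Y : Type*} [MetricSpace Y] [CompleteSpace Y] (F : Y → ℝ)
    (hF : LowerSemicontinuous F) (B : ℝ) (hB : ∀ z, B ≤ F z) (y₀ : Y) (ρ : ℝ) (hρ : 0 < ρ) :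
    ∃ y, F y ≤ F y₀ ∧ ∀ z, F y ≤ F z + ρ * dist y z := by
  classical
  set S : Y → Set Y := fun y => {z | F z + ρ * dist y z ≤ F y} with hS
  have hself : ∀ y, y ∈ S y := fun y => by simp [hS]
  have hbdd : ∀ y, BddBelow (F '' S y) := fun y => ⟨B, by rintro _ ⟨z, _, rfl⟩; exact hB z⟩
  set m : Y → ℝ := fun y => sInf (F '' S y) with hm
  have hm_le : ∀ y z, z ∈ S y → m y ≤ F z := fun y z hz => csInf_le (hbdd y) ⟨z, hz, rfl⟩
  have hchoose : ∀ (y : Y) (n : ℕ), ∃ z, z ∈ S y ∧ F z < m y + (1/2 : ℝ)^n := by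
    intro y n
    have h1 : sInf (F '' S y) < m y + (1/2 : ℝ)^n :=
      lt_add_of_pos_right _ (pow_pos (by norm_num) n)
    obtain ⟨_, ⟨z, hz, rfl⟩, hlt⟩ :=
      exists_lt_of_csInf_lt (⟨F y, y, hself y, rfl⟩ : (F '' S y).Nonempty) h1
    exact ⟨z, hz, hlt⟩
  set seq : ℕ → Y := fun n => Nat.rec y₀ (fun n y => (hchoose y n).choose) n with hseqdef
  have hseqS : ∀ n, seq (n+1) ∈ S (seq n) := fun n => (hchoose (seq n) n).choose_spec.1
  have hseqm : ∀ n, F (seq (n+1)) < m (seq n) + (1/2 : ℝ)^n :=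
    fun n => (hchoose (seq n) n).choose_spec.2
  have hstep : ∀ n, F (seq (n+1)) + ρ * dist (seq n) (seq (n+1)) ≤ F (seq n) := fun n => hseqS n
  have hdec : ∀ n, F (seq (n+1)) ≤ F (seq n) := fun n => by
    have := hstep n
    have := mul_nonneg hρ.le (dist_nonneg (x := seq n) (y := seq (n+1)))
    linarith
  have hanti : Antitone fun n => F (seq n) := antitone_nat_of_succ_le hdec
  have hbddr : BddBelow (range fun n => F (seq n)) := ⟨B, by rintro _ ⟨n, rfl⟩; exact hB _⟩
  set L : ℝ := ⨅ n, F (seq n) with hLdef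
  have hL : Tendsto (fun n => F (seq n)) atTop (𝓝 L) := tendsto_atTop_ciInf hanti hbddr
  have hLle : ∀ n, L ≤ F (seq n) := fun n => ciInf_le hbddr n
  have hchain : ∀ k n, k ≤ n → ρ * dist (seq k) (seq n) ≤ F (seq k) - F (seq n) := by
    intro k n hkn
    induction n, hkn using Nat.le_induction with
    | base => simp
    | succ n hkn ih =>
      have h1 : dist (seq k) (seq (n+1)) ≤ dist (seq k) (seq n) + dist (seq n) (seq (n+1)) :=
        dist_triangle _ _ _
      have h2 := hstep n
      nlinarith [mul_le_mul_of_nonneg_left h1 hρ.le]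
  have hcauchy : CauchySeq seq := by
    apply cauchySeq_of_le_tendsto_0 (fun n => (F (seq n) - L) / ρ)
    · intro n k N hn hk
      rcases le_total n k with h | h
      · have := hchain n k h
        have h2 : F (seq n) ≤ F (seq N) := hanti hn
        have h3 := hLle k
        rw [le_div_iff₀ hρ]
        nlinarith [dist_nonneg (x := seq n) (y := seq k)]
      · have := hchain k n h
        have h2 : F (seq k) ≤ F (seq N) := hanti hk
        have h3 := hLle n
        rw [dist_comm, le_div_iff₀ hρ]
        nlinarith [dist_nonneg (x := seq k) (y := seq n)]
    · have : Tendsto (fun n => (F (seq n) - L) / ρ) atTop (𝓝 ((L - L) / ρ)) :=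
        (hL.sub tendsto_const_nhds).div_const ρ
      simpa using this
  obtain ⟨y, hy⟩ := cauchySeq_tendsto_of_complete hcauchy
  have hFyL : F y ≤ L := by
    by_contra h
    push_neg at h
    obtain ⟨b, hb1, hb2⟩ := exists_between h
    have hev1 : ∀ᶠ n in atTop, F (seq n) < b := hL.eventually_lt_const hb1
    have hev2 : ∀ᶠ n in atTop, b < F (seq n) := hy.eventually (hF y b hb2)
    obtain ⟨n, h1, h2⟩ := (hev1.and hev2).exists
    linarith
  refine ⟨y, hFyL.trans (hLle 0), fun z => ?_⟩
  by_contra h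
  push_neg at h
  obtain ⟨b, hb1, hb2⟩ := exists_between h
  have hdist : Tendsto (fun n => F z + ρ * dist (seq n) z) atTop (𝓝 (F z + ρ * dist y z)) :=
    tendsto_const_nhds.add (((hy.dist tendsto_const_nhds)).const_mul ρ)
  have hev1 : ∀ᶠ n in atTop, F z + ρ * dist (seq n) z < b := hdist.eventually_lt_const hb1
  have hev3 : ∀ᶠ n in atTop, F (seq (n+1)) ≤ F z + (1/2 : ℝ)^n := by
    filter_upwards [hev1] with n hn
    have hzS : z ∈ S (seq n) := by
      have : b ≤ F (seq n) := le_trans (le_trans hb2.le hFyL) (hLle n)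
      exact le_trans hn.le this
    exact le_trans (hseqm n).le (by linarith [hm_le (seq n) z hzS])
  have hlim1 : Tendsto (fun n => F (seq (n+1))) atTop (𝓝 L) :=
    hL.comp (tendsto_add_atTop_nat 1)
  have hlim2 : Tendsto (fun n => F z + (1/2 : ℝ)^n) atTop (𝓝 (F z + 0)) :=
    tendsto_const_nhds.add (tendsto_pow_atTop_nhds_zero_of_lt_one (by norm_num) (by norm_num))
  have hLz : L ≤ F z + 0 := le_of_tendsto_of_tendsto hlim1 hlim2 hev3
  have hd : 0 ≤ ρ * dist y z := mul_nonneg hρ.le dist_nonneg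
  linarith



set_option maxHeartbeats 1000000 in
/-- Deformation argument: if `E` is `C¹`, satisfies the Palais–Smale condition, the
endpoints `u₀, u₁` have energies `< c − ε`, `c` is the minimax value over paths from
`u₀` to `u₁`, and `E` has no critical point at any level in `[c−ε, c+ε]`, then a
contradiction follows; hence `c` is a critical value. -/
theorem minimax_is_critical_value_deformation {X : Type*} [NormedAddCommGroup X]
    [NormedSpace ℝ X] [CompleteSpace X]
    (E : X → ℝ) (hE : ContDiff ℝ 1 E)
    (hPS : ∀ u : ℕ → X, (∃ C : ℝ, ∀ n, |E (u n)| ≤ C) →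
      Tendsto (fun n => ‖fderiv ℝ E (u n)‖) atTop (nhds 0) →
      ∃ (x : X) (φ : ℕ → ℕ), StrictMono φ ∧ Tendsto (u ∘ φ) atTop (nhds x))
    (u₀ u₁ : X) (c ε : ℝ) (hε : 0 < ε)
    (hE0 : E u₀ < c - ε) (hE1 : E u₁ < c - ε)
    (hc : c = sInf {m : ℝ | ∃ g : ℝ → X, ContinuousOn g (Icc 0 1) ∧
      g 0 = u₀ ∧ g 1 = u₁ ∧ m = sSup ((fun s => E (g s)) '' Icc 0 1)})
    (hnc : ∀ x : X, fderiv ℝ E x = 0 → E x ∉ Icc (c - ε) (c + ε)) :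
    False := by
  classical
  have hEc : Continuous E := hE.continuous
  have hE' : Continuous (fderiv ℝ E) := hE.continuous_fderiv one_ne_zero
  set SS : Set ℝ := {m : ℝ | ∃ g : ℝ → X, ContinuousOn g (Icc 0 1) ∧
      g 0 = u₀ ∧ g 1 = u₁ ∧ m = sSup ((fun s => E (g s)) '' Icc 0 1)} with hSSdef
  -- lower bound for members of SS
  have hlow : ∀ m ∈ SS, E u₀ ≤ m := by
    rintro m ⟨g, hg, hg0, hg1, rfl⟩
    have hcomp : IsCompact ((fun s => E (g s)) '' Icc 0 1) :=
      isCompact_Icc.image_of_continuousOn (hEc.comp_continuousOn hg)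
    exact le_csSup hcomp.bddAbove ⟨0, ⟨le_rfl, zero_le_one⟩, by simp [hg0]⟩
  have hSne : SS.Nonempty := by
    refine ⟨_, fun s => u₀ + s • (u₁ - u₀), ?_, ?_, ?_, rfl⟩
    · exact (continuous_const.add (continuous_id.smul continuous_const)).continuousOn
    · simp
    · simp
  have hcle : ∀ m ∈ SS, c ≤ m := fun m hm => hc ▸ csInf_le ⟨E u₀, hlow⟩ hm
  -- Step 1 : uniform lower bound on the gradient in the band
  obtain ⟨δ, hδpos, hδ⟩ : ∃ δ > 0, ∀ x : X, c - ε ≤ E x → E x ≤ c + ε →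
      δ ≤ ‖fderiv ℝ E x‖ := by
    by_contra hcon
    push_neg at hcon
    set u : ℕ → X := fun n => (hcon (1/(n+1)) (by positivity)).choose with hudef
    have hu : ∀ n, (c - ε ≤ E (u n)) ∧ E (u n) ≤ c + ε ∧
        ‖fderiv ℝ E (u n)‖ < 1/(n+1) := fun n => by
      obtain ⟨h1, h2, h3⟩ := (hcon (1/(n+1)) (by positivity)).choose_spec
      exact ⟨h1, h2, h3⟩
    have hub : ∃ C, ∀ n, |E (u n)| ≤ C := by
      refine ⟨|c| + ε, fun n => ?_⟩
      have h1 := (hu n).1; have h2 := (hu n).2.1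
      rw [abs_le]
      constructor
      · linarith [neg_abs_le c]
      · linarith [le_abs_self c]
    have htend : Tendsto (fun n => ‖fderiv ℝ E (u n)‖) atTop (𝓝 0) := by
      apply squeeze_zero (fun n => norm_nonneg _) (fun n => ((hu n).2.2).le)
      exact tendsto_one_div_add_atTop_nhds_zero_nat
    obtain ⟨x, φ, hφ, hconv⟩ := hPS u hub htend
    have h0 : Tendsto (fun n => ‖fderiv ℝ E ((u ∘ φ) n)‖) atTop (𝓝 ‖fderiv ℝ E x‖) :=
      ((continuous_norm.comp hE').continuousAt.tendsto).comp hconv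
    have h0' : Tendsto (fun n => ‖fderiv ℝ E ((u ∘ φ) n)‖) atTop (𝓝 0) :=
      htend.comp hφ.tendsto_atTop
    have hcrit : fderiv ℝ E x = 0 := norm_eq_zero.mp (tendsto_nhds_unique h0 h0')
    have hmem : E x ∈ Icc (c - ε) (c + ε) := by
      have hExt : Tendsto (fun n => E ((u ∘ φ) n)) atTop (𝓝 (E x)) :=
        (hEc.continuousAt.tendsto).comp hconv
      exact isClosed_Icc.mem_of_tendsto hExt
        (Eventually.of_forall fun n => ⟨(hu (φ n)).1, (hu (φ n)).2.1⟩)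
    exact hnc x hcrit hmem
  -- Step 2 : the complete metric space of paths and the max functional
  set z0 : Icc (0:ℝ) 1 := ⟨0, by norm_num⟩ with hz0
  set z1 : Icc (0:ℝ) 1 := ⟨1, by norm_num⟩ with hz1
  set P : Set C(Icc (0:ℝ) 1, X) := {f | f z0 = u₀ ∧ f z1 = u₁} with hPdef
  have hPc : IsClosed P :=
    IsClosed.inter (isClosed_eq (continuous_eval_const _) continuous_const)
      (isClosed_eq (continuous_eval_const _) continuous_const)
  haveI : CompleteSpace P := hPc.completeSpace_coe
  set F : P → ℝ := fun f => sSup (range fun σ : Icc (0:ℝ) 1 => E (f.1 σ)) with hFdef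
  have hbddA : ∀ f : C(Icc (0:ℝ) 1, X), BddAbove (range fun σ => E (f σ)) := fun f =>
    (isCompact_range (hEc.comp f.continuous)).bddAbove
  have hFge : ∀ (f : P) (σ : Icc (0:ℝ) 1), E (f.1 σ) ≤ F f := fun f σ =>
    le_csSup (hbddA f.1) ⟨σ, rfl⟩
  have hFle : ∀ (f : P) (M : ℝ), (∀ σ, E (f.1 σ) ≤ M) → F f ≤ M := fun f M h =>
    csSup_le (range_nonempty _) (by rintro _ ⟨σ, rfl⟩; exact h σ)
  -- F f belongs to SS
  have hFmem : ∀ f : P, F f ∈ SS := by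
    intro f
    refine ⟨fun s => f.1 (projIcc 0 1 zero_le_one s),
      (f.1.continuous.comp continuous_projIcc).continuousOn, ?_, ?_, ?_⟩
    · show f.1 (projIcc 0 1 zero_le_one 0) = u₀
      rw [show projIcc 0 1 zero_le_one 0 = z0 from Subtype.ext (by simp [coe_projIcc, hz0])]; exact f.2.1
    · show f.1 (projIcc 0 1 zero_le_one 1) = u₁
      rw [show projIcc 0 1 zero_le_one 1 = z1 from Subtype.ext (by simp [coe_projIcc, hz1])]; exact f.2.2
    · refine congrArg sSup ?_
      ext a
      constructor
      · rintro ⟨σ, rfl⟩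
        exact ⟨σ, σ.2, by simp [projIcc_of_mem zero_le_one σ.2]⟩
      · rintro ⟨s, hs, rfl⟩
        exact ⟨projIcc 0 1 zero_le_one s, rfl⟩
  have hcF : ∀ f : P, c ≤ F f := fun f => hcle _ (hFmem f)
  -- lower semicontinuity of F
  have hlsc : LowerSemicontinuous F := by
    intro f b hb
    obtain ⟨_, ⟨σ, rfl⟩, hσ⟩ := exists_lt_of_lt_csSup (range_nonempty _) hb
    have hcont : Continuous fun g : P => E (g.1 σ) :=
      hEc.comp ((continuous_eval_const σ).comp continuous_subtype_val)
    have hev : ∀ᶠ g : P in 𝓝 f, b < E (g.1 σ) :=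
      hcont.continuousAt.eventually_const_lt hσ
    filter_upwards [hev] with g hg
    exact lt_of_lt_of_le hg (hFge g σ)
  -- a starting path with energy close to c
  obtain ⟨m0, hm0S, hm0⟩ := exists_lt_of_csInf_lt hSne
    (show sInf SS < c + ε/2 by rw [← hc]; linarith)
  obtain ⟨g, hg, hg0, hg1, rfl⟩ := hm0S
  have hy₀mem : ((⟨fun σ => g σ, hg.restrict⟩ : C(Icc (0:ℝ) 1, X))) ∈ P := by
    constructor
    · show g (z0 : ℝ) = u₀; rw [hz0]; exact hg0
    · show g (z1 : ℝ) = u₁; rw [hz1]; exact hg1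
  set y₀ : P := ⟨⟨fun σ => g σ, hg.restrict⟩, hy₀mem⟩ with hy₀def
  have hFy₀ : F y₀ < c + ε/2 := by
    have himg : (range fun σ : Icc (0:ℝ) 1 => E (g σ)) = (fun s => E (g s)) '' Icc 0 1 := by
      rw [show ((fun s => E (g s)) '' Icc 0 1) = range ((fun s => E (g s)) ∘ Subtype.val) from
        by rw [range_comp, Subtype.range_val]]
      rfl
    show sSup (range fun σ : Icc (0:ℝ) 1 => E (g σ)) < c + ε / 2
    rw [himg]
    exact hm0
  -- Ekeland's variational principle
  obtain ⟨y, hyle, hEk⟩ := weak_ekeland F hlsc c hcF y₀ (δ/4) (by positivity)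
  have hyc : c ≤ F y := hcF y
  have hyub : F y < c + ε/2 := lt_of_le_of_lt hyle hFy₀
  -- Step 3 : deform the almost-optimal path y to contradict the Ekeland inequality
  set γ : C(Icc (0:ℝ) 1, X) := y.1 with hγdef
  set A : Set (Icc (0:ℝ) 1) := {σ | c - ε/2 ≤ E (γ σ)} with hAdef
  have hAc : IsCompact A :=
    (isClosed_le continuous_const (hEc.comp γ.continuous)).isCompact
  set K : Set X := γ '' A with hKdef
  have hKc : IsCompact K := hAc.image γ.continuous
  have hKband : ∀ x ∈ K, c - ε/2 ≤ E x ∧ E x ≤ c + ε/2 := by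
    rintro x ⟨σ, hσ, rfl⟩
    exact ⟨hσ, le_trans (hFge y σ) hyub.le⟩
  -- choose descent directions and radii
  have hvr : ∀ i : K, ∃ (v : X) (r : ℝ), ‖v‖ ≤ 1 ∧ 0 < r ∧
      (∀ z, dist z (i : X) ≤ 2*r → δ/2 ≤ fderiv ℝ E z v) ∧
      (∀ z, dist z (i : X) ≤ 2*r → c - ε < E z) := by
    rintro ⟨x, hx⟩
    obtain ⟨h1, h2⟩ := hKband x hx
    have hnorm : (3*δ/4 : ℝ) < ‖fderiv ℝ E x‖ :=
      lt_of_lt_of_le (by linarith) (hδ x (by linarith) (by linarith))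
    obtain ⟨v₀, hv₀, hv₀'⟩ := (fderiv ℝ E x).exists_lt_apply_of_lt_opNorm hnorm
    have hv' : 3*δ/4 < |fderiv ℝ E x v₀| := hv₀'
    set v : X := if 0 ≤ fderiv ℝ E x v₀ then v₀ else -v₀ with hvdef
    have hv1 : ‖v‖ ≤ 1 := by
      rw [hvdef]; split
      · exact hv₀.le
      · rw [norm_neg]; exact hv₀.le
    have hv2 : 3*δ/4 < fderiv ℝ E x v := by
      rw [hvdef]; split
      · rwa [abs_of_nonneg (by assumption)] at hv'
      · rw [map_neg]
        rw [abs_of_neg (by linarith [not_le.mp (by assumption)])] at hv'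
        linarith
    obtain ⟨r1, hr1, hball1⟩ := Metric.continuousAt_iff.mp hE'.continuousAt (δ/4) (by positivity)
    obtain ⟨r2, hr2, hball2⟩ := Metric.continuousAt_iff.mp hEc.continuousAt (ε/4) (by positivity)
    refine ⟨v, min r1 r2 / 3, hv1, by positivity, ?_, ?_⟩
    · intro z hz
      have hz1 : dist z x < r1 := by
        have h3 := min_le_left r1 r2
        have h4 := min_le_right r1 r2
        linarith
      have h5 := hball1 hz1
      rw [dist_eq_norm] at h5
      have h6 : ‖(fderiv ℝ E z - fderiv ℝ E x) v‖ ≤ ‖fderiv ℝ E z - fderiv ℝ E x‖ * ‖v‖ :=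
        (fderiv ℝ E z - fderiv ℝ E x).le_opNorm v
      rw [ContinuousLinearMap.sub_apply] at h6
      have h7 : ‖fderiv ℝ E z - fderiv ℝ E x‖ * ‖v‖ ≤ δ/4 * 1 :=
        mul_le_mul h5.le hv1 (norm_nonneg _) (by positivity)
      have h8 : |fderiv ℝ E z v - fderiv ℝ E x v| ≤ δ/4 := by
        calc |fderiv ℝ E z v - fderiv ℝ E x v| = ‖fderiv ℝ E z v - fderiv ℝ E x v‖ := rfl
        _ ≤ δ/4 := by linarith
      have h9 := abs_le.mp h8
      linarith [h9.1]
    · intro z hz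
      have hz2 : dist z x < r2 := by
        have h3 := min_le_left r1 r2
        have h4 := min_le_right r1 r2
        linarith
      have h5 := hball2 hz2
      rw [Real.dist_eq] at h5
      have h9 := abs_lt.mp h5
      linarith [h9.1]
  choose v r hvnorm hrpos hgrad hband using hvr
  -- finite subcover of K
  have hcov : K ⊆ ⋃ i : K, Metric.ball (i : X) (r i / 2) := fun x hx => by
    refine mem_iUnion.2 ⟨⟨x, hx⟩, ?_⟩
    rw [Metric.mem_ball, dist_self]
    exact half_pos (hrpos ⟨x, hx⟩)
  obtain ⟨T, hT⟩ := hKc.elim_finite_subcover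
    (fun i : K => Metric.ball (i : X) (r i / 2)) (fun i => Metric.isOpen_ball) hcov
  have hKne : K.Nonempty := by
    obtain ⟨_, ⟨σ, rfl⟩, hσ⟩ := exists_lt_of_lt_csSup
      (range_nonempty (fun σ : Icc (0:ℝ) 1 => E (γ σ)))
      (show c - ε/2 < F y by linarith)
    exact ⟨γ σ, σ, hσ.le, rfl⟩
  have hTne : T.Nonempty := by
    obtain ⟨x, hx⟩ := hKne
    have := hT hx
    rw [mem_iUnion₂] at this
    obtain ⟨i, hi, _⟩ := this
    exact ⟨i, hi⟩
  -- step size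
  set t : ℝ := min (ε/δ) (T.inf' hTne r) with htdef
  have ht_pos : 0 < t := lt_min (by positivity) (by
    rw [Finset.lt_inf'_iff]; exact fun i _ => hrpos i)
  have ht_le_r : ∀ i ∈ T, t ≤ r i := fun i hi =>
    le_trans (min_le_right _ _) (Finset.inf'_le r hi)
  have htδ : t * δ ≤ ε := by
    have h1 : t ≤ ε/δ := min_le_left _ _
    calc t * δ ≤ (ε/δ) * δ := mul_le_mul_of_nonneg_right h1 hδpos.le
    _ = ε := div_mul_cancel₀ ε hδpos.ne'
  -- bump functions and pseudo-gradient field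
  set ρf : K → X → ℝ := fun i x => max 0 (1 - dist x (i : X) / r i) with hρdef
  have hρcont : ∀ i, Continuous (ρf i) := fun i =>
    continuous_const.max (continuous_const.sub ((continuous_id.dist continuous_const).div_const _))
  have hρ0 : ∀ (i : K) (x : X), 0 ≤ ρf i x := fun i x => le_max_left _ _
  have hρ1 : ∀ (i : K) (x : X), ρf i x ≤ 1 := fun i x => max_le zero_le_one (by
    have : 0 ≤ dist x (i : X) / r i := div_nonneg dist_nonneg (hrpos i).le
    linarith)
  have hρsupp : ∀ (i : K) (x : X), ρf i x ≠ 0 → dist x (i : X) < r i := by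
    intro i x h
    by_contra hd
    push_neg at hd
    have h1 : (1 : ℝ) ≤ dist x (i : X) / r i := (one_le_div (hrpos i)).2 hd
    exact h (max_eq_left (by linarith))
  have hρhalf : ∀ (i : K) (x : X), dist x (i : X) < r i / 2 → 1/2 ≤ ρf i x := by
    intro i x hd
    have h1 : dist x (i : X) / r i < 1/2 := (div_lt_iff₀ (hrpos i)).2 (by linarith)
    exact le_trans (by linarith) (le_max_right _ _)
  set θ : X → ℝ := fun x => ∑ i ∈ T, ρf i x with hθdef
  set Mx : X → ℝ := fun x => max (θ x) (1/2) with hMdef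
  have hθnn : ∀ x, 0 ≤ θ x := fun x => Finset.sum_nonneg fun i _ => hρ0 i x
  have hMpos : ∀ x, 0 < Mx x := fun x => lt_of_lt_of_le one_half_pos (le_max_right _ _)
  have hθM : ∀ x, θ x ≤ Mx x := fun x => le_max_left _ _
  have hMcont : Continuous Mx :=
    (continuous_finset_sum _ fun i _ => hρcont i).max continuous_const
  set w : X → X := fun x => ∑ i ∈ T, (ρf i x / Mx x) • (v i) with hwdef
  have hwcont : Continuous w := continuous_finset_sum _ fun i _ =>
    ((hρcont i).div hMcont fun x => (hMpos x).ne').smul continuous_const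
  have hwnorm : ∀ x, ‖w x‖ ≤ 1 := by
    intro x
    calc ‖w x‖ ≤ ∑ i ∈ T, ‖(ρf i x / Mx x) • v i‖ := norm_sum_le _ _
    _ ≤ ∑ i ∈ T, ρf i x / Mx x := by
        refine Finset.sum_le_sum fun i _ => ?_
        rw [norm_smul, Real.norm_eq_abs, abs_of_nonneg (div_nonneg (hρ0 i x) (hMpos x).le)]
        calc ρf i x / Mx x * ‖v i‖ ≤ ρf i x / Mx x * 1 :=
              mul_le_mul_of_nonneg_left (hvnorm i) (div_nonneg (hρ0 i x) (hMpos x).le)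
        _ = ρf i x / Mx x := mul_one _
    _ = θ x / Mx x := by rw [hθdef]; exact (Finset.sum_div _ _ _).symm
    _ ≤ 1 := (div_le_one (hMpos x)).2 (hθM x)
  -- derivative lower bound along the field
  have hEw : ∀ x z : X, (∀ i ∈ T, ρf i x ≠ 0 → dist z (i : X) ≤ 2 * r i) →
      δ/2 * (θ x / Mx x) ≤ fderiv ℝ E z (w x) := by
    intro x z hz
    have heq : fderiv ℝ E z (w x) = ∑ i ∈ T, (ρf i x / Mx x) * fderiv ℝ E z (v i) := by
      rw [hwdef]
      simp [map_sum, map_smul, smul_eq_mul]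
    rw [heq, hθdef]
    rw [Finset.sum_div, Finset.mul_sum]
    refine Finset.sum_le_sum fun i hi => ?_
    by_cases hρz : ρf i x = 0
    · simp [hρz]
    · have h1 := hgrad i z (hz i hi hρz)
      have h2 : 0 ≤ ρf i x / Mx x := div_nonneg (hρ0 i x) (hMpos x).le
      calc δ/2 * (ρf i x / Mx x) = (ρf i x / Mx x) * (δ/2) := by ring
      _ ≤ (ρf i x / Mx x) * fderiv ℝ E z (v i) := mul_le_mul_of_nonneg_left h1 h2
  -- the one-step decrease estimate
  have hdecr : ∀ x : X, E (x - t • w x) ≤ E x - t * (δ/2) * (θ x / Mx x) := by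
    intro x
    set a : ℝ := δ/2 * (θ x / Mx x) with hadef
    have hseg : ∀ τ ∈ Icc (0:ℝ) t, ∀ i ∈ T, ρf i x ≠ 0 →
        dist (x - τ • w x) (i : X) ≤ 2 * r i := by
      intro τ hτ i hi hρz
      have h1 : dist x (i : X) < r i := hρsupp i x hρz
      have h2 : dist (x - τ • w x) x ≤ t := by
        rw [dist_eq_norm, sub_sub_cancel_left, norm_neg, norm_smul, Real.norm_eq_abs,
          abs_of_nonneg hτ.1]
        calc τ * ‖w x‖ ≤ t * 1 := mul_le_mul hτ.2 (hwnorm x) (norm_nonneg _) ht_pos.le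
        _ = t := mul_one t
      have h3 := ht_le_r i hi
      calc dist (x - τ • w x) (i : X) ≤ dist (x - τ • w x) x + dist x (i : X) :=
        dist_triangle _ _ _
      _ ≤ 2 * r i := by linarith
    have hψ : ∀ τ : ℝ, HasDerivAt (fun τ : ℝ => E (x - τ • w x) + a * τ)
        (-(fderiv ℝ E (x - τ • w x) (w x)) + a) τ := by
      intro τ
      have h1 : HasDerivAt (fun τ : ℝ => x - τ • w x) (-(w x)) τ := by
        simpa using ((hasDerivAt_id τ).smul_const (w x)).const_sub x
      have h2 : HasFDerivAt E (fderiv ℝ E (x - τ • w x)) (x - τ • w x) :=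
        (hE.differentiable one_ne_zero _).hasFDerivAt
      have h3 := h2.comp_hasDerivAt τ h1
      have h4 : HasDerivAt (fun τ : ℝ => a * τ) a τ := by
        simpa using (hasDerivAt_id τ).const_mul a
      have h5 := h3.add h4
      simp only [map_neg] at h5
      exact h5
    have hmono : AntitoneOn (fun τ : ℝ => E (x - τ • w x) + a * τ) (Icc 0 t) := by
      refine antitoneOn_of_deriv_nonpos (convex_Icc 0 t) ?_ ?_ ?_
      · exact Continuous.continuousOn (by
          exact ((hEc.comp (continuous_const.sub (continuous_id.smul continuous_const))).add
            (continuous_const.mul continuous_id)))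
      · exact fun τ _ => (hψ τ).differentiableAt.differentiableWithinAt
      · intro τ hτ
        rw [interior_Icc] at hτ
        rw [(hψ τ).deriv]
        have h5 := hEw x (x - τ • w x) (hseg τ ⟨hτ.1.le, hτ.2.le⟩)
        rw [hadef]
        linarith
    have h6 := hmono (left_mem_Icc.2 ht_pos.le) (right_mem_Icc.2 ht_pos.le) ht_pos.le
    simp only [zero_smul, sub_zero, mul_zero, add_zero] at h6
    have : a * t = t * (δ/2) * (θ x / Mx x) := by rw [hadef]; ring
    linarith
  -- the field vanishes where E < c - ε
  have hw0 : ∀ x : X, E x < c - ε → w x = 0 := by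
    intro x hx
    rw [hwdef]
    refine Finset.sum_eq_zero fun i hi => ?_
    have hρz : ρf i x = 0 := by
      by_contra hcontra
      have h1 := hρsupp i x hcontra
      have h2 := hband i x (le_trans h1.le (by linarith [hrpos i]))
      linarith
    simp [hρz]
  -- the deformed path
  have hhc : Continuous fun σ : Icc (0:ℝ) 1 => γ σ - t • w (γ σ) :=
    γ.continuous.sub ((hwcont.comp γ.continuous).const_smul t)
  have hh0 : γ z0 - t • w (γ z0) = u₀ := by
    have := y.2.1
    rw [hγdef] at *
    rw [this, hw0 u₀ (by linarith), smul_zero, sub_zero]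
  have hh1 : γ z1 - t • w (γ z1) = u₁ := by
    have := y.2.2
    rw [hγdef] at *
    rw [this, hw0 u₁ (by linarith), smul_zero, sub_zero]
  set ynew : P := ⟨⟨fun σ => γ σ - t • w (γ σ), hhc⟩, hh0, hh1⟩ with hynewdef
  -- value bound on the deformed path
  have hkey : ∀ σ : Icc (0:ℝ) 1, E (ynew.1 σ) ≤ F y - t * (δ/2) := by
    intro σ
    have hval : ynew.1 σ = γ σ - t • w (γ σ) := rfl
    by_cases hA : c - ε/2 ≤ E (γ σ)
    · have hxK : γ σ ∈ K := ⟨σ, hA, rfl⟩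
      have := hT hxK
      rw [mem_iUnion₂] at this
      obtain ⟨i, hiT, hxi⟩ := this
      rw [Metric.mem_ball] at hxi
      have hρi : 1/2 ≤ ρf i (γ σ) := hρhalf i (γ σ) hxi
      have hθx : 1/2 ≤ θ (γ σ) :=
        le_trans hρi (Finset.single_le_sum (fun j _ => hρ0 j (γ σ)) hiT)
      have hMeq : Mx (γ σ) = θ (γ σ) := max_eq_left hθx
      have hfull : θ (γ σ) / Mx (γ σ) = 1 := by rw [hMeq]; exact div_self (by linarith)
      have h7 := hdecr (γ σ)
      rw [hfull] at h7
      have hxF : E (γ σ) ≤ F y := hFge y σ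
      rw [hval]
      linarith
    · push_neg at hA
      have hge0 : 0 ≤ t * (δ/2) * (θ (γ σ) / Mx (γ σ)) := by
        have := hθnn (γ σ)
        have := (hMpos (γ σ)).le
        positivity
      have h7 := hdecr (γ σ)
      rw [hval]
      have h8 : t * (δ/2) ≤ ε/2 := by linarith [htδ]
      linarith
  have hFnew : F ynew ≤ F y - t * (δ/2) := hFle ynew _ hkey
  have hdist : dist y ynew ≤ t := by
    rw [Subtype.dist_eq, ContinuousMap.dist_le ht_pos.le]
    intro σ
    have : dist (γ σ) (ynew.1 σ) ≤ t := by
      rw [dist_eq_norm]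
      have hval : ynew.1 σ = γ σ - t • w (γ σ) := rfl
      rw [hval, sub_sub_cancel, norm_smul, Real.norm_eq_abs, abs_of_nonneg ht_pos.le]
      calc t * ‖w (γ σ)‖ ≤ t * 1 := mul_le_mul_of_nonneg_left (hwnorm _) ht_pos.le
      _ = t := mul_one t
    exact this
  have hcontra := hEk ynew
  have : F y ≤ F y - t * (δ/2) + δ/4 * t := by
    calc F y ≤ F ynew + δ/4 * dist y ynew := hcontra
    _ ≤ (F y - t * (δ/2)) + δ/4 * t :=
      add_le_add hFnew (mul_le_mul_of_nonneg_left hdist (by positivity))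
  nlinarith [ht_pos, hδpos]
end

section
/- Brezis–Lieb type strong convergence criterion: let 1 < p < ∞ and (uₙ) ⊂ L^p with uₙ → u a.e. and (uₙ) bounded in L^p. Then lim (‖uₙ‖_p^p − ‖uₙ − u‖_p^p) = ‖u‖_p^p. -/
open MeasureTheory Filter Topology

open scoped ENNReal NNReal

-- MVT bound
lemma bl_rpow_sub_rpow_le {p : ℝ} (hp : 1 ≤ p) {x y : ℝ} (hy : 0 ≤ y) (hxy : y ≤ x) :
    x ^ p - y ^ p ≤ p * x ^ (p - 1) * (x - y) := by
  rcases eq_or_lt_of_le hxy with rfl | h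
  · simp
  have hx : 0 ≤ x := hy.trans hxy
  obtain ⟨c, hc, hc'⟩ := exists_hasDerivAt_eq_slope (fun t => t ^ p)
      (fun t => p * t ^ (p - 1)) h
      (Continuous.continuousOn (by
        have : Differentiable ℝ fun t : ℝ => t ^ p :=
          fun t => (Real.hasDerivAt_rpow_const (Or.inr hp)).differentiableAt
        exact this.continuous))
      (fun t _ => Real.hasDerivAt_rpow_const (Or.inr hp))
  have hcx : c ^ (p - 1) ≤ x ^ (p - 1) :=
    Real.rpow_le_rpow (hy.trans hc.1.le) hc.2.le (by linarith)
  rw [eq_div_iff (by linarith : x - y ≠ 0)] at hc'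
  rw [← hc']
  have hpnn : (0:ℝ) ≤ p := by linarith
  have hmono : p * c ^ (p - 1) * (x - y) ≤ p * x ^ (p - 1) * (x - y) :=
    mul_le_mul_of_nonneg_right (mul_le_mul_of_nonneg_left hcx hpnn) (by linarith)
  linarith

lemma bl_abs_rpow_sub_abs_rpow {p : ℝ} (hp : 1 ≤ p) (a b : ℝ) :
    |(|a + b|) ^ p - (|a|) ^ p| ≤ p * (|a| + |b|) ^ (p - 1) * |b| := by
  have key : ∀ x y : ℝ, 0 ≤ y → y ≤ x → x ≤ |a| + |b| → x - y ≤ |b| →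
      x ^ p - y ^ p ≤ p * (|a| + |b|) ^ (p - 1) * |b| := by
    intro x y hy hxy hxb hd
    calc x ^ p - y ^ p ≤ p * x ^ (p - 1) * (x - y) := bl_rpow_sub_rpow_le hp hy hxy
    _ ≤ p * (|a| + |b|) ^ (p - 1) * |b| := by
        have h1 : x ^ (p - 1) ≤ (|a| + |b|) ^ (p - 1) :=
          Real.rpow_le_rpow (hy.trans hxy) hxb (by linarith)
        have h2 : (0:ℝ) ≤ x - y := by linarith
        have hpn : (0:ℝ) ≤ p := by linarith
        have := mul_le_mul (mul_le_mul_of_nonneg_left h1 hpn) hd h2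
          (by positivity)
        exact this
  have habs : |(|a + b|) - (|a|)| ≤ |b| := by
    have := abs_abs_sub_abs_le_abs_sub (a + b) a
    simpa using this
  rcases le_total |a| |a + b| with h | h
  · rw [abs_of_nonneg (by
      have := Real.rpow_le_rpow (abs_nonneg a) h (by linarith : (0:ℝ) ≤ p)
      linarith)]
    exact key _ _ (abs_nonneg a) h (abs_add_le a b) (abs_le.mp habs).2
  · rw [abs_sub_comm, abs_of_nonneg (by
      have := Real.rpow_le_rpow (abs_nonneg (a+b)) h (by linarith : (0:ℝ) ≤ p)
      linarith)]
    exact key _ _ (abs_nonneg (a+b)) h (le_add_of_nonneg_right (abs_nonneg b))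
      (by have := (abs_le.mp habs).1; linarith)

lemma bl_young {p : ℝ} (hp : 1 ≤ p) {δ : ℝ} (hδ : 0 < δ) {a b : ℝ} (ha : 0 ≤ a) (hb : 0 ≤ b) :
    a ^ (p - 1) * b ≤ δ * a ^ p + δ ^ (1 - p) * b ^ p := by
  rcases le_total b (δ * a) with h | h
  · rcases eq_or_lt_of_le ha with rfl | ha'
    · have hb0 : b = 0 := le_antisymm (by simpa using h) hb
      subst hb0
      simp only [mul_zero]
      positivity
    · have : a ^ (p - 1) * b ≤ a ^ (p - 1) * (δ * a) :=
        mul_le_mul_of_nonneg_left h (Real.rpow_nonneg ha _)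
      have hap : a ^ (p - 1) * a = a ^ p := by
        rw [← Real.rpow_add_one ha'.ne' (p - 1), sub_add_cancel]
      calc a ^ (p - 1) * b ≤ a ^ (p - 1) * (δ * a) := this
      _ = δ * (a ^ (p - 1) * a) := by ring
      _ = δ * a ^ p := by rw [hap]
      _ ≤ δ * a ^ p + δ ^ (1 - p) * b ^ p := le_add_of_nonneg_right (by positivity)
  · have hab : a ≤ b / δ := (le_div_iff₀ hδ).mpr (by linarith [mul_comm a δ])
    have h1 : a ^ (p - 1) ≤ (b / δ) ^ (p - 1) :=
      Real.rpow_le_rpow ha hab (by linarith)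
    have h2 : (b / δ) ^ (p - 1) = b ^ (p - 1) * δ ^ (1 - p) := by
      rw [Real.div_rpow hb hδ.le, div_eq_mul_inv, ← Real.rpow_neg hδ.le]
      ring_nf
    rcases eq_or_lt_of_le hb with rfl | hb'
    · simp [Real.zero_rpow (by linarith : p ≠ 0)]
      positivity
    · have hbp : b ^ (p - 1) * b = b ^ p := by
        rw [← Real.rpow_add_one hb'.ne' (p - 1), sub_add_cancel]
      calc a ^ (p - 1) * b ≤ (b / δ) ^ (p - 1) * b :=
            mul_le_mul_of_nonneg_right h1 hb
      _ = δ ^ (1 - p) * (b ^ (p - 1) * b) := by rw [h2]; ring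
      _ = δ ^ (1 - p) * b ^ p := by rw [hbp]
      _ ≤ δ * a ^ p + δ ^ (1 - p) * b ^ p := le_add_of_nonneg_left (by positivity)

lemma bl_key {p : ℝ} (hp : 1 ≤ p) {ε : ℝ} (hε : 0 < ε) :
    ∃ C : ℝ, 0 ≤ C ∧ ∀ a b : ℝ, |(|a + b|) ^ p - (|a|) ^ p| ≤ ε * (|a|) ^ p + C * (|b|) ^ p := by
  set q : ℝ := p * 2 ^ (p - 1) with hq
  have hq0 : 0 < q := by positivity
  set δ : ℝ := ε / q with hδdef
  have hδ : 0 < δ := by positivity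
  refine ⟨q * (δ ^ (1 - p) + 1), by positivity, fun a b => ?_⟩
  calc |(|a + b|) ^ p - (|a|) ^ p| ≤ p * (|a| + |b|) ^ (p - 1) * |b| :=
        bl_abs_rpow_sub_abs_rpow hp a b
  _ ≤ q * ((|a|) ^ (p - 1) + (|b|) ^ (p - 1)) * |b| := by
      have hmax : (|a| + |b|) ^ (p - 1) ≤ 2 ^ (p - 1) * ((|a|) ^ (p - 1) + (|b|) ^ (p - 1)) := by
        have h1 : |a| + |b| ≤ 2 * max |a| |b| := by
          rcases le_total |a| |b| with h | h
          · rw [max_eq_right h]; linarith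
          · rw [max_eq_left h]; linarith
        calc (|a| + |b|) ^ (p - 1) ≤ (2 * max |a| |b|) ^ (p - 1) :=
              Real.rpow_le_rpow (by positivity) h1 (by linarith)
        _ = 2 ^ (p - 1) * (max |a| |b|) ^ (p - 1) := by
            rw [Real.mul_rpow (by norm_num) (le_max_iff.mpr (Or.inl (abs_nonneg a)))]
        _ ≤ 2 ^ (p - 1) * ((|a|) ^ (p - 1) + (|b|) ^ (p - 1)) := by
            gcongr
            rcases le_total |a| |b| with h | h
            · rw [max_eq_right h]
              exact le_add_of_nonneg_left (by positivity)
            · rw [max_eq_left h]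
              exact le_add_of_nonneg_right (by positivity)
      calc p * (|a| + |b|) ^ (p - 1) * |b|
          ≤ p * (2 ^ (p - 1) * ((|a|) ^ (p - 1) + (|b|) ^ (p - 1))) * |b| := by
            gcongr
      _ = q * ((|a|) ^ (p - 1) + (|b|) ^ (p - 1)) * |b| := by rw [hq]; ring
  _ ≤ ε * (|a|) ^ p + q * (δ ^ (1 - p) + 1) * (|b|) ^ p := by
      have hy := bl_young hp hδ (abs_nonneg a) (abs_nonneg b)
      have hbb : (|b|) ^ (p - 1) * |b| = (|b|) ^ p := by
        rcases eq_or_lt_of_le (abs_nonneg b) with h | h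
        · rw [← h]
          simp [Real.zero_rpow (show p ≠ 0 by positivity)]
        · rw [← Real.rpow_add_one h.ne' (p - 1), sub_add_cancel]
      have expand : q * ((|a|) ^ (p - 1) + (|b|) ^ (p - 1)) * |b|
          = q * ((|a|) ^ (p - 1) * |b|) + q * ((|b|) ^ (p - 1) * |b|) := by ring
      rw [expand, hbb]
      have h2 : q * ((|a|) ^ (p - 1) * |b|) ≤ q * (δ * (|a|) ^ p + δ ^ (1 - p) * (|b|) ^ p) :=
        mul_le_mul_of_nonneg_left hy hq0.le
      have hqδ : q * δ = ε := by
        rw [hδdef]; field_simp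
      have h2' : q * ((|a|) ^ (p - 1) * |b|)
          ≤ ε * (|a|) ^ p + q * δ ^ (1 - p) * (|b|) ^ p := by
        calc q * ((|a|) ^ (p - 1) * |b|)
            ≤ q * (δ * (|a|) ^ p + δ ^ (1 - p) * (|b|) ^ p) := h2
        _ = (q * δ) * (|a|) ^ p + q * δ ^ (1 - p) * (|b|) ^ p := by ring
        _ = ε * (|a|) ^ p + q * δ ^ (1 - p) * (|b|) ^ p := by rw [hqδ]
      have hrhs : q * (δ ^ (1 - p) + 1) * (|b|) ^ p
          = q * δ ^ (1 - p) * (|b|) ^ p + q * (|b|) ^ p := by ring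
      rw [hrhs]
      linarith

/-- Brezis–Lieb lemma: if `1 ≤ p < ∞`, `(uₙ)` is bounded in `L^p` and converges a.e.
to `u`, then `‖uₙ‖_p^p − ‖uₙ − u‖_p^p → ‖u‖_p^p`. -/
theorem brezis_lieb {Ω : Type*} [MeasurableSpace Ω] (μ : Measure Ω)
    (p : ℝ) (hp : 1 ≤ p) (u : ℕ → Ω → ℝ) (v : Ω → ℝ)
    (hLp : ∀ n, MemLp (u n) (ENNReal.ofReal p) μ)
    (hbdd : ∃ C : NNReal, ∀ n, eLpNorm (u n) (ENNReal.ofReal p) μ ≤ C)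
    (hv : AEStronglyMeasurable v μ)
    (hae : ∀ᵐ x ∂μ, Tendsto (fun n => u n x) atTop (nhds (v x))) :
    Tendsto (fun n => (∫ x, |u n x| ^ p ∂μ) - ∫ x, |u n x - v x| ^ p ∂μ)
      atTop (nhds (∫ x, |v x| ^ p ∂μ)) := by
  obtain ⟨C, hC⟩ := hbdd
  have hp0 : (0:ℝ) < p := by linarith
  set P : ℝ≥0∞ := ENNReal.ofReal p with hPdef
  have hP0 : P ≠ 0 := by
    simp [hPdef, ENNReal.ofReal_eq_zero]; linarith
  have hPtop : P ≠ ∞ := ENNReal.ofReal_ne_top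
  have hPtoReal : P.toReal = p := ENNReal.toReal_ofReal hp0.le
  -- continuity of y ↦ |y| ^ p
  have cont : Continuous (fun y : ℝ => |y| ^ p) :=
    continuous_abs.rpow_const (fun y => Or.inr hp0.le)
  have haux : ∀ (h : Ω → ℝ), AEStronglyMeasurable h μ →
      AEStronglyMeasurable (fun x => |h x| ^ p) μ :=
    fun h hh => cont.comp_aestronglyMeasurable hh
  -- v ∈ L^p
  have hvLp : MemLp v P μ := by
    refine ⟨hv, ?_⟩
    have hle : eLpNorm v P μ ≤ atTop.liminf fun n => eLpNorm (u n) P μ :=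
      Lp.eLpNorm_lim_le_liminf_eLpNorm (fun n => (hLp n).1) v hae
    have hle2 : atTop.liminf (fun n => eLpNorm (u n) P μ) ≤ (C : ℝ≥0∞) := by
      refine liminf_le_of_frequently_le (Frequently.of_forall fun n => hC n)
    exact lt_of_le_of_lt (hle.trans hle2) ENNReal.coe_lt_top
  have hvC : eLpNorm v P μ ≤ (C : ℝ≥0∞) := by
    have hle : eLpNorm v P μ ≤ atTop.liminf fun n => eLpNorm (u n) P μ :=
      Lp.eLpNorm_lim_le_liminf_eLpNorm (fun n => (hLp n).1) v hae
    exact hle.trans (liminf_le_of_frequently_le (Frequently.of_forall fun n => hC n))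
  -- integrability of |f|^p for f ∈ L^p
  have hint : ∀ (f : Ω → ℝ), MemLp f P μ → Integrable (fun x => |f x| ^ p) μ := by
    intro f hf
    have := hf.integrable_norm_rpow hP0 hPtop
    simpa [hPtoReal, Real.norm_eq_abs] using this
  have hgint : Integrable (fun x => |v x| ^ p) μ := hint v hvLp
  have hsubLp : ∀ n, MemLp (fun x => u n x - v x) P μ := fun n => (hLp n).sub hvLp
  have hn1 : ∀ n, Integrable (fun x => |u n x| ^ p) μ := fun n => hint _ (hLp n)
  have hn2 : ∀ n, Integrable (fun x => |u n x - v x| ^ p) μ := fun n => hint _ (hsubLp n)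
  -- uniform bound M on ∫ |u n - v|^p
  set M : ℝ := (2 * (C:ℝ)) ^ p with hMdef
  have hM0 : 0 ≤ M := by positivity
  have hM : ∀ n, (∫ x, |u n x - v x| ^ p ∂μ) ≤ M := by
    intro n
    have h1 : eLpNorm (fun x => u n x - v x) P μ ≤ ((C : ℝ≥0∞) + C) :=
      le_trans (eLpNorm_sub_le (hLp n).1 hv (by simpa [hPdef] using ENNReal.one_le_ofReal.mpr hp))
        (add_le_add (hC n) hvC)
    rw [(hsubLp n).eLpNorm_eq_integral_rpow_norm hP0 hPtop, hPtoReal] at h1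
    have h2 : ((∫ x, ‖u n x - v x‖ ^ p ∂μ) ^ p⁻¹ : ℝ) ≤ 2 * (C:ℝ) := by
      have hcc : ((C : ℝ≥0∞) + C) = ENNReal.ofReal (2 * (C:ℝ)) := by
        rw [← ENNReal.coe_add, ← ENNReal.ofReal_coe_nnreal]
        congr 1
        push_cast
        ring
      rw [hcc] at h1
      exact (ENNReal.ofReal_le_ofReal_iff (by positivity)).mp h1
    have h3 : (0:ℝ) ≤ ∫ x, ‖u n x - v x‖ ^ p ∂μ :=
      integral_nonneg fun x => Real.rpow_nonneg (norm_nonneg _) _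
    have h4 := Real.rpow_le_rpow (by positivity) h2 hp0.le
    rw [Real.rpow_inv_rpow h3 hp0.ne'] at h4
    calc (∫ x, |u n x - v x| ^ p ∂μ) = ∫ x, ‖u n x - v x‖ ^ p ∂μ := by
          simp [Real.norm_eq_abs]
    _ ≤ (2 * (C:ℝ)) ^ p := h4
  -- reduce to convergence of ∫ (|u n|^p - |u n - v|^p)
  have hrw : (fun n => (∫ x, |u n x| ^ p ∂μ) - ∫ x, |u n x - v x| ^ p ∂μ)
      = fun n => ∫ x, (|u n x| ^ p - |u n x - v x| ^ p) ∂μ :=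
    funext fun n => (integral_sub (hn1 n) (hn2 n)).symm
  rw [hrw]
  rw [← tendsto_sub_nhds_zero_iff]
  -- it suffices to show ∫ |f n - g| → 0
  have key : Tendsto (fun n => ∫ x, |(|u n x| ^ p - |u n x - v x| ^ p) - |v x| ^ p| ∂μ)
      atTop (𝓝 0) := by
    rw [Metric.tendsto_atTop]
    intro ε' hε'
    set ε : ℝ := ε' / (2 * (M + 1)) with hεdef
    have hε : 0 < ε := by positivity
    obtain ⟨C₀, hC₀, hkey⟩ := bl_key hp hε
    -- the truncated functions W n
    set W : ℕ → Ω → ℝ := fun n x =>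
      max (|(|u n x| ^ p - |u n x - v x| ^ p) - |v x| ^ p| - ε * |u n x - v x| ^ p) 0 with hWdef
    have hWmeas : ∀ n, AEStronglyMeasurable (W n) μ := by
      intro n
      have h1 := haux _ (hLp n).1
      have h2 := haux _ ((hLp n).1.sub hv)
      have h3 := haux _ hv
      have habs : AEStronglyMeasurable
          (fun x => |(|u n x| ^ p - |u n x - v x| ^ p) - |v x| ^ p|) μ := by
        have := ((h1.sub h2).sub h3).norm
        simpa [Real.norm_eq_abs] using this
      exact ((habs.sub (h2.const_mul ε)).sup aestronglyMeasurable_const)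
    have hWbound : ∀ n, ∀ᵐ x ∂μ, ‖W n x‖ ≤ (C₀ + 1) * |v x| ^ p := by
      intro n
      refine Eventually.of_forall fun x => ?_
      have hk := hkey (u n x - v x) (v x)
      rw [sub_add_cancel] at hk
      have hW0 : 0 ≤ W n x := le_max_right _ _
      rw [Real.norm_eq_abs, abs_of_nonneg hW0]
      have hb : |(|u n x| ^ p - |u n x - v x| ^ p) - |v x| ^ p|
          ≤ ε * |u n x - v x| ^ p + (C₀ + 1) * |v x| ^ p := by
        have htri : |(|u n x| ^ p - |u n x - v x| ^ p) - |v x| ^ p|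
            ≤ |(|u n x|) ^ p - (|u n x - v x|) ^ p| + |v x| ^ p := by
          have := abs_sub (|u n x| ^ p - |u n x - v x| ^ p) (|v x| ^ p)
          calc |(|u n x| ^ p - |u n x - v x| ^ p) - |v x| ^ p|
              ≤ |(|u n x| ^ p - |u n x - v x| ^ p)| + |(|v x| ^ p)| := abs_sub _ _
          _ = |(|u n x|) ^ p - (|u n x - v x|) ^ p| + |v x| ^ p := by
              rw [abs_of_nonneg (Real.rpow_nonneg (abs_nonneg _) _)]
        calc |(|u n x| ^ p - |u n x - v x| ^ p) - |v x| ^ p|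
            ≤ |(|u n x|) ^ p - (|u n x - v x|) ^ p| + |v x| ^ p := htri
        _ ≤ (ε * |u n x - v x| ^ p + C₀ * |v x| ^ p) + |v x| ^ p := by
            have := hk; linarith [hk]
        _ = ε * |u n x - v x| ^ p + (C₀ + 1) * |v x| ^ p := by ring
      apply max_le _ (by positivity)
      linarith
    have hWlim : ∀ᵐ x ∂μ, Tendsto (fun n => W n x) atTop (𝓝 0) := by
      filter_upwards [hae] with x hx
      have h1 : Tendsto (fun n => |u n x| ^ p) atTop (𝓝 (|v x| ^ p)) :=
        (cont.tendsto (v x)).comp hx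
      have h2 : Tendsto (fun n => |u n x - v x| ^ p) atTop (𝓝 0) := by
        have hx2 : Tendsto (fun n => u n x - v x) atTop (𝓝 0) := by
          simpa using hx.sub (tendsto_const_nhds (x := v x))
        have := (cont.tendsto 0).comp hx2
        simpa [Real.zero_rpow hp0.ne', Function.comp_def] using this
      have : Tendsto (fun n => W n x) atTop
          (𝓝 (max (|(|v x| ^ p - 0) - |v x| ^ p| - ε * 0) 0)) := by
        exact (((((h1.sub h2)).sub tendsto_const_nhds).abs.sub
          (h2.const_mul ε)).max tendsto_const_nhds)
      simpa using this
    have hWint : Tendsto (fun n => ∫ x, W n x ∂μ) atTop (𝓝 (∫ _x, (0:ℝ) ∂μ)) := by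
      refine tendsto_integral_of_dominated_convergence _ hWmeas
        (hgint.const_mul (C₀ + 1)) hWbound hWlim
    rw [integral_zero] at hWint
    rw [Metric.tendsto_atTop] at hWint
    obtain ⟨N, hN⟩ := hWint ((ε' / 2)) (by positivity)
    refine ⟨N, fun n hn => ?_⟩
    have hWn := hN n hn
    rw [Real.dist_eq, sub_zero] at hWn ⊢
    have hWnonneg : 0 ≤ ∫ x, W n x ∂μ :=
      integral_nonneg fun x => le_max_right _ _
    rw [abs_of_nonneg hWnonneg] at hWn
    have hIn : Integrable (W n) μ := by
      refine Integrable.mono (hgint.const_mul (C₀ + 1)) (hWmeas n) ?_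
      filter_upwards [hWbound n] with x hx
      rw [Real.norm_eq_abs ((C₀ + 1) * |v x| ^ p), abs_of_nonneg (by positivity)]
      exact hx
    have habsint : Integrable (fun x => |(|u n x| ^ p - |u n x - v x| ^ p) - |v x| ^ p|) μ :=
      (((hn1 n).sub (hn2 n)).sub hgint).abs
    have hptwise : ∀ x, |(|u n x| ^ p - |u n x - v x| ^ p) - |v x| ^ p|
        ≤ W n x + ε * |u n x - v x| ^ p := by
      intro x
      have : |(|u n x| ^ p - |u n x - v x| ^ p) - |v x| ^ p| - ε * |u n x - v x| ^ p
          ≤ W n x := le_max_left _ _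
      linarith
    have hmono : (∫ x, |(|u n x| ^ p - |u n x - v x| ^ p) - |v x| ^ p| ∂μ)
        ≤ (∫ x, W n x ∂μ) + ε * ∫ x, |u n x - v x| ^ p ∂μ := by
      calc (∫ x, |(|u n x| ^ p - |u n x - v x| ^ p) - |v x| ^ p| ∂μ)
          ≤ ∫ x, (W n x + ε * |u n x - v x| ^ p) ∂μ := by
            refine integral_mono habsint (hIn.add ((hn2 n).const_mul ε)) hptwise
      _ = (∫ x, W n x ∂μ) + ε * ∫ x, |u n x - v x| ^ p ∂μ := by
          rw [integral_add hIn ((hn2 n).const_mul ε), integral_const_mul]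
    have hεM : ε * (∫ x, |u n x - v x| ^ p ∂μ) ≤ ε' / 2 := by
      have h1 : ε * (∫ x, |u n x - v x| ^ p ∂μ) ≤ ε * M :=
        mul_le_mul_of_nonneg_left (hM n) hε.le
      have h2 : ε * M ≤ ε' / 2 := by
        rw [hεdef]
        rw [div_mul_eq_mul_div, div_le_div_iff₀ (by positivity) (by norm_num)]
        nlinarith
      linarith
    have hnonneg : 0 ≤ ∫ x, |(|u n x| ^ p - |u n x - v x| ^ p) - |v x| ^ p| ∂μ :=
      integral_nonneg fun x => abs_nonneg _
    rw [abs_of_nonneg hnonneg]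
    linarith
  -- conclude by squeezing
  refine squeeze_zero_norm (fun n => ?_) key
  have hfn : Integrable (fun x => |u n x| ^ p - |u n x - v x| ^ p) μ := (hn1 n).sub (hn2 n)
  rw [← integral_sub hfn hgint]
  refine (norm_integral_le_integral_norm _).trans (le_of_eq ?_)
  exact integral_congr_ae (Eventually.of_forall fun x => by simp [Real.norm_eq_abs])
end
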